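/- There exists a constant C > 0 such that for all real numbers a > b ≥ 0 and all ε ∈ (0,1): P(D₂ ≤ ε^a and D₁ ≤ ε^b) ≤ C · ε^{2a+b}. -/

import Mathlib

open MeasureTheory ProbabilityTheory Real Filter

/-- Density of the Beta distribution `β(u,v)` with respect to Lebesgue measure. -/
noncomputable def betaPDFReal (u v x : ℝ) : ℝ :=
  if 0 < x ∧ x < 1 then
    Real.Gamma (u + v) / (Real.Gamma u * Real.Gamma v) * x ^ (u - 1) * (1 - x) ^ (v - 1)
  else 0

/-- The Beta distribution `β(u,v)` on `ℝ`. -/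
noncomputable def betaMeasure (u v : ℝ) : Measure ℝ :=
  volume.withDensity fun x => ENNReal.ofReal (_root_.betaPDFReal u v x)

/-- Density of the generalized Gamma distribution `GG(u,v)` w.r.t. Lebesgue measure. -/
noncomputable def genGammaPDFReal (u v x : ℝ) : ℝ :=
  if 0 < x then v / Real.Gamma (u / v) * x ^ (u - 1) * Real.exp (-(x ^ v)) else 0

/-- The generalized Gamma distribution `GG(u,v)` on `ℝ`. -/
noncomputable def genGammaMeasure (u v : ℝ) : Measure ℝ :=
  volume.withDensity fun x => ENNReal.ofReal (genGammaPDFReal u v x)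

/-- There is `C > 0` such that for all `a > b ≥ 0` and `ε ∈ (0,1)`,
`P(D₂ ≤ ε^a ∧ D₁ ≤ ε^b) ≤ C * ε^(2a+b)`, where `D₁ = B₁B₂Z₃` and `D₂ = (1-B₁)B₂Z₃`. -/
lemma gamma3 : Real.Gamma 3 = 2 := by
  rw [show (3:ℝ) = ((2:ℕ):ℝ)+1 by norm_num, Real.Gamma_nat_eq_factorial]; norm_num [Nat.factorial]

lemma gamma4 : Real.Gamma 4 = 6 := by
  rw [show (4:ℝ) = ((3:ℕ):ℝ)+1 by norm_num, Real.Gamma_nat_eq_factorial]; norm_num [Nat.factorial]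

lemma beta12_eval (y : ℝ) : _root_.betaPDFReal 1 2 y = if 0 < y ∧ y < 1 then 2*(1-y) else 0 := by
  unfold _root_.betaPDFReal
  rw [show (1:ℝ)+2 = 3 by norm_num, gamma3, Real.Gamma_one, Real.Gamma_two]
  norm_num

lemma beta31_eval (s : ℝ) : _root_.betaPDFReal 3 1 s = if 0 < s ∧ s < 1 then 3*s^2 else 0 := by
  unfold _root_.betaPDFReal
  rw [show (3:ℝ)+1 = 4 by norm_num, gamma4, gamma3, Real.Gamma_one]
  rw [show (3:ℝ)-1 = ((2:ℕ):ℝ) by norm_num, Real.rpow_natCast]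
  norm_num

lemma gg52_eval (t : ℝ) :
    genGammaPDFReal 5 2 t = if 0 < t then 2/Real.Gamma (5/2) * t^4 * Real.exp (-(t^2)) else 0 := by
  unfold genGammaPDFReal
  rw [show (5:ℝ)-1 = ((4:ℕ):ℝ) by norm_num, Real.rpow_natCast,
    show (2:ℝ) = ((2:ℕ):ℝ) from by norm_num, Real.rpow_natCast]

lemma beta_null (u v : ℝ) : _root_.betaMeasure u v (Set.Iic 0) = 0 := by
  rw [_root_.betaMeasure, withDensity_apply _ measurableSet_Iic]
  rw [setLIntegral_congr_fun measurableSet_Iic (fun s hs => ?_), lintegral_zero]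
  unfold _root_.betaPDFReal
  rw [if_neg (by rintro ⟨h1, _⟩; exact absurd h1 (not_lt.2 hs)), ENNReal.ofReal_zero]

lemma gg_null (u v : ℝ) : genGammaMeasure u v (Set.Iic 0) = 0 := by
  rw [genGammaMeasure, withDensity_apply _ measurableSet_Iic]
  rw [setLIntegral_congr_fun measurableSet_Iic (fun s hs => ?_), lintegral_zero]
  unfold genGammaPDFReal
  rw [if_neg (not_lt.2 hs), ENNReal.ofReal_zero]

lemma J_val : ∫⁻ t in Set.Ioi (0:ℝ), ENNReal.ofReal (t * Real.exp (-(t^2))) = ENNReal.ofReal (1/2) := by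
  have hderiv : ∀ t ∈ Set.Ici (0:ℝ), HasDerivAt (fun t : ℝ => -(Real.exp (-(t^2)))/2)
      (t * Real.exp (-(t^2))) t := by
    intro t _
    have h1 : HasDerivAt (fun t:ℝ => -(t^2)) (-(2*t)) t := by
      simpa [Pi.neg_def] using (hasDerivAt_pow 2 t).neg
    have h2 := (h1.exp).neg.div_const 2
    exact h2.congr_deriv (by ring)
  have hnonneg : ∀ t ∈ Set.Ioi (0:ℝ), 0 ≤ t * Real.exp (-(t^2)) := by
    intro t ht; exact mul_nonneg (le_of_lt ht) (Real.exp_pos _).le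
  have htend : Tendsto (fun t : ℝ => -(Real.exp (-(t^2)))/2) atTop (nhds 0) := by
    have h0 : Tendsto (fun t:ℝ => -(t^2)) atTop atBot := by
      apply tendsto_neg_atBot_iff.mpr
      exact tendsto_pow_atTop two_ne_zero
    have := (Real.tendsto_exp_atBot.comp h0).neg.div_const 2
    simpa using this
  have hint : IntegrableOn (fun t : ℝ => t * Real.exp (-(t^2))) (Set.Ioi 0) :=
    integrableOn_Ioi_deriv_of_nonneg' hderiv hnonneg htend
  have hval : ∫ t in Set.Ioi (0:ℝ), t * Real.exp (-(t^2)) = 1/2 := by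
    rw [integral_Ioi_of_hasDerivAt_of_nonneg' hderiv hnonneg htend]
    norm_num
  rw [← ofReal_integral_eq_lintegral_ofReal hint
    ((ae_restrict_mem measurableSet_Ioi).mono fun t ht => hnonneg t ht), hval]

lemma beta31_meas : Measurable fun s : ℝ => ENNReal.ofReal (_root_.betaPDFReal 3 1 s) := by
  simp_rw [beta31_eval]
  apply Measurable.ennreal_ofReal
  exact Measurable.ite
    ((measurableSet_lt measurable_const measurable_id).inter
      (measurableSet_lt measurable_id measurable_const))
    (by fun_prop) (by fun_prop)

lemma gg52_meas : Measurable fun t : ℝ => ENNReal.ofReal (genGammaPDFReal 5 2 t) := by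
  simp_rw [gg52_eval]
  apply Measurable.ennreal_ofReal
  exact Measurable.ite (measurableSet_lt measurable_const measurable_id)
    (by fun_prop) (by fun_prop)

theorem eve_adam_joint_bound {Ω : Type*} [MeasurableSpace Ω] (P : Measure Ω) [IsProbabilityMeasure P]
    (B₁ B₂ Z₃ : Ω → ℝ) (hB₁ : Measurable B₁) (hB₂ : Measurable B₂) (hZ₃ : Measurable Z₃)
    (hindep : iIndepFun ![B₁, B₂, Z₃] P)
    (hlaw₁ : P.map B₁ = _root_.betaMeasure 1 2)
    (hlaw₂ : P.map B₂ = _root_.betaMeasure 3 1)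
    (hlaw₃ : P.map Z₃ = genGammaMeasure 5 2) :
    ∃ C : ℝ, 0 < C ∧ ∀ a b ε : ℝ, b < a → 0 ≤ b → 0 < ε → ε < 1 →
      P {ω | (1 - B₁ ω) * B₂ ω * Z₃ ω ≤ ε ^ a ∧ B₁ ω * B₂ ω * Z₃ ω ≤ ε ^ b}
        ≤ ENNReal.ofReal (C * ε ^ (2 * a + b)) := by
  haveI i₁ : IsProbabilityMeasure (_root_.betaMeasure 1 2) := hlaw₁ ▸ Measure.isProbabilityMeasure_map hB₁.aemeasurable
  haveI i₂ : IsProbabilityMeasure (_root_.betaMeasure 3 1) := hlaw₂ ▸ Measure.isProbabilityMeasure_map hB₂.aemeasurable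
  haveI i₃ : IsProbabilityMeasure (genGammaMeasure 5 2) := hlaw₃ ▸ Measure.isProbabilityMeasure_map hZ₃.aemeasurable
  have hΓ : 0 < Real.Gamma (5/2) := Real.Gamma_pos_of_pos (by norm_num)
  refine ⟨12 / Real.Gamma (5/2), by positivity, fun a b ε hba hb hε hε1 => ?_⟩
  have hεa : (0:ℝ) < ε ^ a := Real.rpow_pos_of_pos hε a
  have hεb : (0:ℝ) < ε ^ b := Real.rpow_pos_of_pos hε b
  have hab : ε ^ a ≤ ε ^ b := Real.rpow_le_rpow_of_exponent_ge hε hε1.le hba.le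
  -- joint law
  have hmeas : ∀ i, Measurable (![B₁, B₂, Z₃] i) := by
    intro i; fin_cases i <;> simpa
  have h32 : IndepFun Z₃ B₂ P := by
    have := hindep.indepFun (i := 2) (j := 1) (by decide)
    simpa using this
  have hmapPair : P.map (fun ω => (Z₃ ω, B₂ ω)) = (genGammaMeasure 5 2).prod (_root_.betaMeasure 3 1) := by
    rw [← hlaw₃, ← hlaw₂]
    exact (indepFun_iff_map_prod_eq_prod_map_map hZ₃.aemeasurable hB₂.aemeasurable).mp h32
  have hTindep : IndepFun (fun ω => (Z₃ ω, B₂ ω)) B₁ P := by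
    have := hindep.indepFun_prodMk hmeas 2 1 0 (by decide) (by decide)
    simpa using this
  have hpairmeas : Measurable fun ω => (Z₃ ω, B₂ ω) := hZ₃.prodMk hB₂
  have hmapT : P.map (fun ω => ((Z₃ ω, B₂ ω), B₁ ω))
      = ((genGammaMeasure 5 2).prod (_root_.betaMeasure 3 1)).prod (_root_.betaMeasure 1 2) := by
    rw [← hmapPair, ← hlaw₁]
    exact (indepFun_iff_map_prod_eq_prod_map_map hpairmeas.aemeasurable hB₁.aemeasurable).mp hTindep
  set S : Set ((ℝ × ℝ) × ℝ) :=
    {p | (1 - p.2) * p.1.2 * p.1.1 ≤ ε ^ a ∧ p.2 * p.1.2 * p.1.1 ≤ ε ^ b} with hSdef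
  have hS : MeasurableSet S := by
    rw [hSdef, Set.setOf_and]
    exact (measurableSet_le (by fun_prop) measurable_const).inter
      (measurableSet_le (by fun_prop) measurable_const)
  have hPev : P {ω | (1 - B₁ ω) * B₂ ω * Z₃ ω ≤ ε ^ a ∧ B₁ ω * B₂ ω * Z₃ ω ≤ ε ^ b}
      = (((genGammaMeasure 5 2).prod (_root_.betaMeasure 3 1)).prod (_root_.betaMeasure 1 2)) S := by
    rw [← hmapT, Measure.map_apply (hpairmeas.prodMk hB₁) hS]
    rfl
  rw [hPev, Measure.prod_apply hS]
  -- the middle bound function on (t,s) pairs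
  set G : ℝ × ℝ → ENNReal := fun p =>
    if p.2 * p.1 ≤ 2 * ε ^ b then ENNReal.ofReal (2 * (ε ^ a / (p.2 * p.1))^2) else 0 with hGdef
  have hGmeas : Measurable G := by
    apply Measurable.ite (measurableSet_le (by fun_prop) measurable_const) _ measurable_const
    fun_prop
  have hprod_ae : ∀ᵐ p ∂((genGammaMeasure 5 2).prod (_root_.betaMeasure 3 1)), 0 < p.1 ∧ 0 < p.2 := by
    rw [ae_iff]
    have hsub : {p : ℝ × ℝ | ¬(0 < p.1 ∧ 0 < p.2)} ⊆
        (Set.Iic 0 ×ˢ (Set.univ : Set ℝ)) ∪ ((Set.univ : Set ℝ) ×ˢ Set.Iic 0) := by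
      intro p hp
      rcases not_and_or.mp hp with h | h
      · exact Or.inl ⟨not_lt.mp h, trivial⟩
      · exact Or.inr ⟨trivial, not_lt.mp h⟩
    refine measure_mono_null hsub (measure_union_null ?_ ?_)
    · rw [Measure.prod_prod, gg_null, zero_mul]
    · rw [Measure.prod_prod, beta_null, mul_zero]
  have hinner : ∀ᵐ p ∂((genGammaMeasure 5 2).prod (_root_.betaMeasure 3 1)),
      _root_.betaMeasure 1 2 (Prod.mk p ⁻¹' S) ≤ G p := by
    filter_upwards [hprod_ae] with p hp
    obtain ⟨ht, hs⟩ := hp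
    have hu0 : 0 < p.2 * p.1 := mul_pos hs ht
    have hAm : MeasurableSet (Prod.mk p ⁻¹' S) := hS.preimage measurable_prodMk_left
    rw [_root_.betaMeasure, withDensity_apply _ hAm]
    by_cases hcase : p.2 * p.1 ≤ 2 * ε ^ b
    · set r := ε ^ a / (p.2 * p.1) with hr
      have hr0 : 0 < r := div_pos hεa hu0
      have hptwise : ∀ y : ℝ,
          (Prod.mk p ⁻¹' S).indicator (fun y => ENNReal.ofReal (_root_.betaPDFReal 1 2 y)) y
          ≤ (Set.Icc (1 - r) 1).indicator (fun _ => ENNReal.ofReal (2*r)) y := by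
        intro y
        by_cases hy : y ∈ Prod.mk p ⁻¹' S
        · rw [Set.indicator_of_mem hy]
          obtain ⟨h1, h2⟩ := hy
          rw [beta12_eval]
          by_cases hy01 : 0 < y ∧ y < 1
          · rw [if_pos hy01]
            have h1y : 1 - y ≤ r := by
              rw [hr, le_div_iff₀ hu0]
              calc (1-y) * (p.2 * p.1) = (1 - y) * p.2 * p.1 := by ring
                _ ≤ ε ^ a := h1
            have hymem : y ∈ Set.Icc (1 - r) 1 := ⟨by linarith, by linarith [hy01.2]⟩
            rw [Set.indicator_of_mem hymem]
            exact ENNReal.ofReal_le_ofReal (by linarith)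
          · rw [if_neg hy01]; simp
        · rw [Set.indicator_of_notMem hy]; exact zero_le
      have hG : G p = ENNReal.ofReal (2 * r^2) := by
        rw [hGdef]; simp only [if_pos hcase]; rfl
      calc ∫⁻ y in Prod.mk p ⁻¹' S, ENNReal.ofReal (_root_.betaPDFReal 1 2 y)
          = ∫⁻ y, (Prod.mk p ⁻¹' S).indicator (fun y => ENNReal.ofReal (_root_.betaPDFReal 1 2 y)) y :=
            (lintegral_indicator hAm _).symm
        _ ≤ ∫⁻ y, (Set.Icc (1 - r) 1).indicator (fun _ => ENNReal.ofReal (2*r)) y :=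
            lintegral_mono hptwise
        _ = ENNReal.ofReal (2*r) * volume (Set.Icc (1-r) 1) := by
            rw [lintegral_indicator measurableSet_Icc, setLIntegral_const]
        _ = ENNReal.ofReal (2*r) * ENNReal.ofReal r := by
            rw [Real.volume_Icc]
            congr 1
            ring
        _ = ENNReal.ofReal (2 * r^2) := by
            rw [← ENNReal.ofReal_mul (by positivity)]; ring_nf
        _ = G p := hG.symm
    · have hzero : ∀ y ∈ Prod.mk p ⁻¹' S, ENNReal.ofReal (_root_.betaPDFReal 1 2 y) = 0 := by
        intro y hy
        obtain ⟨h1, h2⟩ := hy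
        rw [beta12_eval, if_neg, ENNReal.ofReal_zero]
        rintro ⟨hy0, hy1⟩
        have e1 : (1 - y) * (p.2 * p.1) ≤ ε ^ a := by
          calc (1-y) * (p.2 * p.1) = (1 - y) * p.2 * p.1 := by ring
            _ ≤ ε ^ a := h1
        have e2 : y * (p.2 * p.1) ≤ ε ^ b := by
          calc y * (p.2 * p.1) = y * p.2 * p.1 := by ring
            _ ≤ ε ^ b := h2
        have : p.2 * p.1 ≤ ε ^ a + ε ^ b := by nlinarith
        exact hcase (by linarith)
      rw [setLIntegral_congr_fun hAm hzero, lintegral_zero]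
      exact zero_le
  calc ∫⁻ p, _root_.betaMeasure 1 2 (Prod.mk p ⁻¹' S) ∂((genGammaMeasure 5 2).prod (_root_.betaMeasure 3 1))
      ≤ ∫⁻ p, G p ∂((genGammaMeasure 5 2).prod (_root_.betaMeasure 3 1)) := lintegral_mono_ae hinner
    _ = ∫⁻ t, ∫⁻ s, G (t, s) ∂(_root_.betaMeasure 3 1) ∂(genGammaMeasure 5 2) :=
        lintegral_prod G hGmeas.aemeasurable
    _ ≤ ∫⁻ t, ENNReal.ofReal (12 * (ε^a)^2 * ε^b * (t^3)⁻¹) ∂(genGammaMeasure 5 2) := by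
        apply lintegral_mono_ae
        have hae : ∀ᵐ t ∂(genGammaMeasure 5 2), 0 < t := by
          rw [ae_iff]
          refine measure_mono_null (fun t ht => not_lt.mp ht) (gg_null 5 2)
        filter_upwards [hae] with t ht
        have htne : t ≠ 0 := ne_of_gt ht
        rw [_root_.betaMeasure, lintegral_withDensity_eq_lintegral_mul volume beta31_meas
          (show Measurable (fun s : ℝ => G (t, s)) from hGmeas.comp (by fun_prop))]
        have hpt : ∀ s : ℝ,
            ((fun s => ENNReal.ofReal (_root_.betaPDFReal 3 1 s)) * fun s => G (t, s)) s
            ≤ (Set.Icc 0 (2 * ε^b / t)).indicator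
                (fun _ => ENNReal.ofReal (6 * (ε^a)^2 / t^2)) s := by
          intro s
          simp only [Pi.mul_apply]
          rw [beta31_eval]
          by_cases hs01 : 0 < s ∧ s < 1
          · rw [if_pos hs01]
            rw [hGdef]
            simp only
            by_cases hst : s * t ≤ 2 * ε ^ b
            · rw [if_pos hst]
              have hsmem : s ∈ Set.Icc 0 (2 * ε^b / t) :=
                ⟨hs01.1.le, (le_div_iff₀ ht).mpr hst⟩
              rw [Set.indicator_of_mem hsmem, ← ENNReal.ofReal_mul (by positivity)]
              apply ENNReal.ofReal_le_ofReal
              apply le_of_eq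
              have hsne : s ≠ 0 := ne_of_gt hs01.1
              field_simp [hsne, htne]
              ring
            · rw [if_neg hst, mul_zero]; exact zero_le
          · rw [if_neg hs01, ENNReal.ofReal_zero, zero_mul]; exact zero_le
        calc ∫⁻ s, ((fun s => ENNReal.ofReal (_root_.betaPDFReal 3 1 s)) * fun s => G (t, s)) s
            ≤ ∫⁻ s, (Set.Icc 0 (2 * ε^b / t)).indicator
                (fun _ => ENNReal.ofReal (6 * (ε^a)^2 / t^2)) s := lintegral_mono hpt
          _ = ENNReal.ofReal (6 * (ε^a)^2 / t^2) * volume (Set.Icc 0 (2 * ε^b / t)) := by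
              rw [lintegral_indicator measurableSet_Icc, setLIntegral_const]
          _ = ENNReal.ofReal (6 * (ε^a)^2 / t^2) * ENNReal.ofReal (2 * ε^b / t) := by
              rw [Real.volume_Icc]
              congr 1
              ring
          _ = ENNReal.ofReal (12 * (ε^a)^2 * ε^b * (t^3)⁻¹) := by
              rw [← ENNReal.ofReal_mul (by positivity)]
              congr 1
              field_simp
              ring
    _ = ∫⁻ t, ENNReal.ofReal (genGammaPDFReal 5 2 t) *
          ENNReal.ofReal (12 * (ε^a)^2 * ε^b * (t^3)⁻¹) ∂volume := by
        rw [genGammaMeasure, lintegral_withDensity_eq_lintegral_mul volume gg52_meas (by fun_prop)]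
        rfl
    _ ≤ ∫⁻ t, (Set.Ioi (0:ℝ)).indicator
          (fun t => ENNReal.ofReal (24 / Real.Gamma (5/2) * ((ε^a)^2 * ε^b)) *
            ENNReal.ofReal (t * Real.exp (-(t^2)))) t ∂volume := by
        apply lintegral_mono
        intro t
        dsimp only
        rw [gg52_eval]
        by_cases ht : 0 < t
        · rw [if_pos ht, Set.indicator_of_mem (Set.mem_Ioi.mpr ht)]
          rw [← ENNReal.ofReal_mul (by positivity), ← ENNReal.ofReal_mul (by positivity)]
          apply ENNReal.ofReal_le_ofReal
          have htne : t ≠ 0 := ne_of_gt ht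
          apply le_of_eq
          field_simp
          ring
        · rw [if_neg ht, Set.indicator_of_notMem (by simpa using ht), ENNReal.ofReal_zero, zero_mul]
    _ = ENNReal.ofReal (24 / Real.Gamma (5/2) * ((ε^a)^2 * ε^b)) *
          ∫⁻ t in Set.Ioi (0:ℝ), ENNReal.ofReal (t * Real.exp (-(t^2))) := by
        rw [lintegral_indicator measurableSet_Ioi, lintegral_const_mul _ (by fun_prop)]
    _ = ENNReal.ofReal (12 / Real.Gamma (5/2) * ε ^ (2*a+b)) := by
        rw [J_val, ← ENNReal.ofReal_mul (by positivity)]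
        congr 1
        have hrw : ε ^ (2*a+b) = (ε^a)^2 * ε^b := by
          rw [Real.rpow_add hε, show 2*a = a*2 by ring, Real.rpow_mul hε.le,
            show (2:ℝ) = ((2:ℕ):ℝ) from by norm_num, Real.rpow_natCast]
        rw [hrw]
        ring
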